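/- (Strengthened star inequalities are valid) For any T = {t₁ < t₂ < ... < t_a} ⊆ {1,...,ν} and with t_{a+1} interpreted via h_{t_{a+1}} := h_{ν+1}, the inequality y + Σ_{j=1}^{a} (h_{t_j} − h_{t_{j+1}}) z_{t_j} ≥ h_{t_1} holds for all (y,z) ∈ Q. -/

import Mathlib

open Finset

/-- Membership in the mixing set with knapsack constraint `Q`. -/
def memQ (n : ℕ) (h a : Fin n → ℝ) (p : ℝ) (y : ℝ) (z : Fin n → ℝ) : Prop :=
  0 ≤ y ∧ (∀ j, z j = 0 ∨ z j = 1) ∧ (∑ j, a j * z j) ≤ p ∧ ∀ j, h j ≤ y + h j * z j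

/-- Partial sum `s_k = ∑_{j ≤ k} a_j` (1-indexed paper notation; here the first `k`
0-based indices). -/
def sk (n : ℕ) (a : Fin n → ℝ) (k : ℕ) : ℝ :=
  ∑ j ∈ univ.filter (fun j : Fin n => (j : ℕ) < k), a j

/-- Membership in the residual knapsack set `P_k`. -/
def memPk (n : ℕ) (a : Fin n → ℝ) (p : ℝ) (k : ℕ) (z : Fin n → ℝ) : Prop :=
  (∀ j, z j = 0 ∨ z j = 1) ∧
    (∑ j ∈ univ.filter (fun j : Fin n => k ≤ (j : ℕ)), a j * z j) ≤ p - sk n a k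

/-- The minimizer function `f_k(α) = min{ ∑_{j > k} α_j z_j : z ∈ P_k }`. -/
noncomputable def fk (n : ℕ) (a : Fin n → ℝ) (p : ℝ) (α : Fin n → ℝ) (k : ℕ) : ℝ :=
  sInf {x : ℝ | ∃ z : Fin n → ℝ, memPk n a p k z ∧
    x = ∑ j ∈ univ.filter (fun j : Fin n => k ≤ (j : ℕ)), α j * z j}

/-- Validity of the strengthened star inequalities: for `T = {t₁ < ⋯ < t_A} ⊆ {1,…,ν}`
(0-based here, so `(t j) < ν`), with `h_{t_{A+1}} := h_{ν+1}`,
`y + ∑_j (h_{t_j} - h_{t_{j+1}}) z_{t_j} ≥ h_{t₁}` holds on `Q`. -/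
theorem stmt11 (n : ℕ) (hn : 0 < n) (h a : Fin n → ℝ) (p : ℝ)
    (hmono : ∀ i j : Fin n, i ≤ j → h j ≤ h i) (hhnn : ∀ j, 0 ≤ h j)
    (hann : ∀ j, 0 ≤ a j) (hap : ∀ j, a j ≤ p) (hsum : p < ∑ j, a j)
    (ν : ℕ) (hνn : ν < n) (hν1 : sk n a ν ≤ p) (hν2 : p < sk n a (ν + 1))
    (A : ℕ) (hA : 0 < A) (t : Fin A → Fin n) (ht : StrictMono t)
    (htν : ∀ j, (t j : ℕ) < ν) :
    ∀ (y : ℝ) (z : Fin n → ℝ), memQ n h a p y z →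
      h (t ⟨0, hA⟩) ≤ y + ∑ j : Fin A,
        (h (t j) - (if hj : (j : ℕ) + 1 < A then h (t ⟨(j : ℕ) + 1, hj⟩)
          else h ⟨ν, hνn⟩)) * z (t j) := by
  classical
  intro y z hQ
  obtain ⟨hy0, hbin, hknap, hcon⟩ := hQ
  have hz0 : ∀ j, 0 ≤ z j := by
    intro j; rcases hbin j with h0 | h1
    · simp [h0]
    · simp [h1]
  -- y ≥ h ν
  have hyν : h ⟨ν, hνn⟩ ≤ y := by
    have hex : ∃ j : Fin n, (j : ℕ) ≤ ν ∧ z j = 0 := by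
      by_contra hc
      push_neg at hc
      have h1 : sk n a (ν + 1) ≤ ∑ j, a j * z j := by
        rw [sk]
        have : ∀ j ∈ univ.filter (fun j : Fin n => (j : ℕ) < ν + 1), a j = a j * z j := by
          intro j hj
          simp only [mem_filter] at hj
          have := hc j (Nat.lt_succ_iff.mp hj.2)
          rcases hbin j with h0 | h1
          · exact absurd h0 this
          · simp [h1]
        rw [Finset.sum_congr rfl this]
        apply Finset.sum_le_sum_of_subset_of_nonneg (Finset.filter_subset _ _)
        intro j _ _
        exact mul_nonneg (hann j) (hz0 j)
      linarith
    obtain ⟨j, hjν, hj0⟩ := hex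
    have := hcon j
    rw [hj0] at this
    have hjle : h ⟨ν, hνn⟩ ≤ h j := hmono j ⟨ν, hνn⟩ (Fin.le_def.mpr hjν)
    simp at this
    linarith
  set g : ℕ → ℝ := fun m => if hm : m < A then h (t ⟨m, hm⟩) else h ⟨ν, hνn⟩ with hg
  have hgmono : ∀ m, g (m + 1) ≤ g m := by
    intro m
    by_cases h1 : m + 1 < A
    · have hm : m < A := Nat.lt_of_succ_lt h1
      simp only [hg, dif_pos h1, dif_pos hm]
      exact hmono _ _ (le_of_lt (ht (Fin.mk_lt_mk.mpr (Nat.lt_succ_self m))))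
    · by_cases hm : m < A
      · simp only [hg, dif_neg h1, dif_pos hm]
        exact hmono _ _ (Fin.le_def.mpr (le_of_lt (htν ⟨m, hm⟩)))
      · simp [hg, dif_neg h1, dif_neg hm]
  set F : ℕ → ℝ := fun m => if hm : m < A then (g m - g (m + 1)) * z (t ⟨m, hm⟩) else 0 with hF
  have hsum_eq : ∑ j : Fin A,
      (h (t j) - (if hj : (j : ℕ) + 1 < A then h (t ⟨(j : ℕ) + 1, hj⟩)
        else h ⟨ν, hνn⟩)) * z (t j) = ∑ m ∈ Finset.range A, F m := by
    rw [← Fin.sum_univ_eq_sum_range F A]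
    apply Finset.sum_congr rfl
    intro j _
    simp only [hF, hg, dif_pos j.isLt, Fin.eta]
  rw [hsum_eq]
  have hFnn : ∀ m, 0 ≤ F m := by
    intro m
    by_cases hm : m < A
    · simp only [hF, dif_pos hm]
      exact mul_nonneg (by linarith [hgmono m]) (hz0 _)
    · simp [hF, dif_neg hm]
  -- find k
  have main : ∃ k, k ≤ A ∧ g k ≤ y ∧ ∀ m (hm : m < A), m < k → z (t ⟨m, hm⟩) = 1 := by
    by_cases hex : ∃ m, ∃ hm : m < A, z (t ⟨m, hm⟩) = 0
    · let k := Nat.find hex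
      obtain ⟨hkA, hkz⟩ := Nat.find_spec hex
      refine ⟨k, le_of_lt hkA, ?_, ?_⟩
      · have := hcon (t ⟨k, hkA⟩)
        rw [hkz] at this
        simp only [hg, dif_pos hkA]
        split_ifs with hk
        · simpa using this
        · exact absurd hkA hk
      · intro m hm hmk
        have := Nat.find_min hex hmk
        push_neg at this
        rcases hbin (t ⟨m, hm⟩) with h0 | h1
        · exact absurd h0 (this hm)
        · exact h1
    · refine ⟨A, le_refl A, ?_, ?_⟩
      · simpa [hg] using hyν
      · intro m hm hmk
        push_neg at hex
        rcases hbin (t ⟨m, hm⟩) with h0 | h1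
        · exact absurd h0 (hex m hm)
        · exact h1
  obtain ⟨k, hkA, hky, hk1⟩ := main
  have hsplit : ∑ m ∈ Finset.range k, F m + ∑ m ∈ Finset.Ico k A, F m
      = ∑ m ∈ Finset.range A, F m := Finset.sum_range_add_sum_Ico F hkA
  have hIco : 0 ≤ ∑ m ∈ Finset.Ico k A, F m :=
    Finset.sum_nonneg fun m _ => hFnn m
  have hrangek : ∑ m ∈ Finset.range k, F m = g 0 - g k := by
    rw [← Finset.sum_range_sub' g k]
    apply Finset.sum_congr rfl
    intro m hm
    rw [Finset.mem_range] at hm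
    have hmA : m < A := lt_of_lt_of_le hm hkA
    simp only [hF, dif_pos hmA, hk1 m hmA hm, mul_one]
  have hg0 : g 0 = h (t ⟨0, hA⟩) := by simp [hg, dif_pos hA]
  linarith
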